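/- Let L > 0, T > 0, μ > 0, δ > 0. Let g ∈ C³([0,L];ℝ) with g'(x) ≥ μ for all x ∈ [0,L], and let h ∈ C¹([0,T];ℝ) with h'(t) ≥ δ for all t ∈ [0,T]; set J = [h(0), h(T)], assume g([0,L]) ⊆ J, and fix p ∈ J. Then there exists a constant C > 0, depending only on g, h, μ, δ, L and T, with the following property: whenever â ∈ C²([0,L];ℝ) with â(L) = 0, f̂ ∈ C¹(J;ℝ) with f̂(p) = 0, ǔ ∈ C¹([0,L];ℝ) and ψ ∈ C¹([0,T];ℝ) satisfy (â·g')'(x) + f̂(g(x)) = ǔ(x) for all x ∈ [0,L] and f̂(h(t)) = ψ(t) for all t ∈ [0,T], one has ‖â‖_{C²([0,L])} + ‖f̂‖_{C¹(J)} ≤ C·( ‖ǔ‖_{C¹([0,L])} + ‖ψ‖_{C¹([0,T])} ). -/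

import Mathlib

open Set

/-- Supremum of the absolute value of `w` over a set `s`. -/
noncomputable def supAbs (w : ℝ → ℝ) (s : Set ℝ) : ℝ :=
  sSup ((fun x => |w x|) '' s)

/-- The `C¹` norm of `w` on a set `s`. -/
noncomputable def normC1 (w : ℝ → ℝ) (s : Set ℝ) : ℝ :=
  supAbs w s + supAbs (deriv w) s

/-- The `C²` norm of `w` on a set `s`. -/
noncomputable def normC2 (w : ℝ → ℝ) (s : Set ℝ) : ℝ :=
  supAbs w s + supAbs (deriv w) s + supAbs (deriv (deriv w)) s

lemma supAbs_le {w : ℝ → ℝ} {s : Set ℝ} {M : ℝ} (hM : 0 ≤ M)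
    (H : ∀ x ∈ s, |w x| ≤ M) : supAbs w s ≤ M :=
  Real.sSup_le (by rintro _ ⟨x, hx, rfl⟩; exact H x hx) hM

lemma le_supAbs {w : ℝ → ℝ} {a b x : ℝ} (hw : Continuous w) (hx : x ∈ Icc a b) :
    |w x| ≤ supAbs w (Icc a b) :=
  le_csSup ((isCompact_Icc.image (continuous_abs.comp hw)).bddAbove) ⟨x, hx, rfl⟩

lemma supAbs_nonneg {w : ℝ → ℝ} {a b : ℝ} (hw : Continuous w) (hab : a ≤ b) :
    0 ≤ supAbs w (Icc a b) :=
  (abs_nonneg _).trans (le_supAbs hw (left_mem_Icc.2 hab))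

lemma le_on_Icc_of_Ioo {a b : ℝ} (hab : a < b) {φ : ℝ → ℝ} (hφ : Continuous φ)
    {M : ℝ} (H : ∀ t ∈ Ioo a b, φ t ≤ M) : ∀ t ∈ Icc a b, φ t ≤ M := by
  have hcl : closure (Ioo a b) = Icc a b := closure_Ioo hab.ne
  intro t ht
  exact le_on_closure (f := φ) (g := fun _ => M) H hφ.continuousOn continuousOn_const
    (by rwa [hcl])

/-- Sup-norm bounded invertibility of `𝕄(â,f̂) = ((â·g')' + f̂∘g, f̂∘h)` in the
final-time / time-trace observation setting. -/
theorem M_bounded_invertibility_mixed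
    (L T μ δ : ℝ) (hL : 0 < L) (hT : 0 < T) (hμ : 0 < μ) (hδ : 0 < δ)
    (g : ℝ → ℝ) (hg : ContDiff ℝ 3 g) (hg' : ∀ x ∈ Icc (0:ℝ) L, μ ≤ deriv g x)
    (h : ℝ → ℝ) (hh : ContDiff ℝ 1 h) (hh' : ∀ t ∈ Icc (0:ℝ) T, δ ≤ deriv h t)
    (hrange : MapsTo g (Icc (0:ℝ) L) (Icc (h 0) (h T)))
    (p : ℝ) (hp : p ∈ Icc (h 0) (h T)) :
    ∃ C > 0, ∀ (ahat fhat ucheck ψ : ℝ → ℝ),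
      ContDiff ℝ 2 ahat → ahat L = 0 →
      ContDiff ℝ 1 fhat → fhat p = 0 →
      ContDiff ℝ 1 ucheck → ContDiff ℝ 1 ψ →
      (∀ x ∈ Icc (0:ℝ) L,
        deriv (fun y => ahat y * deriv g y) x + fhat (g x) = ucheck x) →
      (∀ t ∈ Icc (0:ℝ) T, fhat (h t) = ψ t) →
      normC2 ahat (Icc (0:ℝ) L) + normC1 fhat (Icc (h 0) (h T)) ≤
        C * (normC1 ucheck (Icc (0:ℝ) L) + normC1 ψ (Icc (0:ℝ) T)) := by
  -- regularity of g
  have hgd : Differentiable ℝ g := hg.differentiable (by norm_num)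
  have hg2 : ContDiff ℝ 2 (deriv g) := by
    have := (contDiff_succ_iff_deriv.mp
      (show ContDiff ℝ ((2:ℕ) + 1) g by exact_mod_cast hg)).2.2
    exact_mod_cast this
  have hg2d : Differentiable ℝ (deriv g) := hg2.differentiable (by norm_num)
  have hg3 : ContDiff ℝ 1 (deriv (deriv g)) := by
    have := (contDiff_succ_iff_deriv.mp
      (show ContDiff ℝ ((1:ℕ) + 1) (deriv g) by exact_mod_cast hg2)).2.2
    exact_mod_cast this
  have hg3d : Differentiable ℝ (deriv (deriv g)) := hg3.differentiable one_ne_zero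
  have hg3c : Continuous (deriv (deriv (deriv g))) := (contDiff_one_iff_deriv.mp hg3).2
  -- uniform bound K on the first three derivatives of g on [0, L]
  obtain ⟨K, hK⟩ := isCompact_Icc.exists_bound_of_continuousOn
    (f := fun x => |deriv g x| + |deriv (deriv g) x| + |deriv (deriv (deriv g)) x|)
    (s := Icc (0:ℝ) L)
    (Continuous.continuousOn (by fun_prop))
  have hKabs : ∀ x ∈ Icc (0:ℝ) L,
      |deriv g x| + |deriv (deriv g) x| + |deriv (deriv (deriv g)) x| ≤ K := by
    intro x hx
    have := hK x hx
    rwa [Real.norm_eq_abs, abs_of_nonneg (by positivity)] at this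
  have hK0 : 0 ≤ K := by
    have h0 := hKabs 0 (left_mem_Icc.2 hL.le)
    have := abs_nonneg (deriv g 0)
    have := abs_nonneg (deriv (deriv g) 0)
    have := abs_nonneg (deriv (deriv (deriv g)) 0)
    linarith
  have hK1 : ∀ x ∈ Icc (0:ℝ) L, |deriv g x| ≤ K := by
    intro x hx
    have := hKabs x hx
    have := abs_nonneg (deriv (deriv g) x)
    have := abs_nonneg (deriv (deriv (deriv g)) x)
    linarith
  have hK2 : ∀ x ∈ Icc (0:ℝ) L, |deriv (deriv g) x| ≤ K := by
    intro x hx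
    have := hKabs x hx
    have := abs_nonneg (deriv g x)
    have := abs_nonneg (deriv (deriv (deriv g)) x)
    linarith
  have hK3 : ∀ x ∈ Icc (0:ℝ) L, |deriv (deriv (deriv g)) x| ≤ K := by
    intro x hx
    have := hKabs x hx
    have := abs_nonneg (deriv g x)
    have := abs_nonneg (deriv (deriv g) x)
    linarith
  -- constants
  obtain ⟨c0, hc0⟩ : ∃ c0 : ℝ, c0 = 2 * L / μ := ⟨_, rfl⟩
  obtain ⟨c1, hc1⟩ : ∃ c1 : ℝ, c1 = (2 + c0 * K) / μ := ⟨_, rfl⟩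
  obtain ⟨c2, hc2⟩ : ∃ c2 : ℝ, c2 = ((1 + K / δ) + 2 * c1 * K + c0 * K) / μ := ⟨_, rfl⟩
  have hc0nn : 0 ≤ c0 := by rw [hc0]; positivity
  have hc1nn : 0 ≤ c1 := by rw [hc1]; positivity
  have hc2nn : 0 ≤ c2 := by rw [hc2]; positivity
  refine ⟨c0 + c1 + c2 + 1 + 1 / δ, by nlinarith [one_div_pos.mpr hδ], ?_⟩
  intro ahat fhat ucheck psi hahat haL hfhat hfp hucheck hpsi heq hpsieq
  -- continuity and differentiability facts
  have hu_c : Continuous ucheck := hucheck.continuous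
  have hu_d : Differentiable ℝ ucheck := hucheck.differentiable one_ne_zero
  have hu'_c : Continuous (deriv ucheck) := (contDiff_one_iff_deriv.mp hucheck).2
  have hpsi_c : Continuous psi := hpsi.continuous
  have hpsi'_c : Continuous (deriv psi) := (contDiff_one_iff_deriv.mp hpsi).2
  have hf_d : Differentiable ℝ fhat := hfhat.differentiable one_ne_zero
  have hf'_c : Continuous (deriv fhat) := (contDiff_one_iff_deriv.mp hfhat).2
  have hh_d : Differentiable ℝ h := hh.differentiable one_ne_zero
  have ha_d : Differentiable ℝ ahat := hahat.differentiable (by norm_num)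
  have ha1 : ContDiff ℝ 1 (deriv ahat) := by
    have := (contDiff_succ_iff_deriv.mp
      (show ContDiff ℝ ((1:ℕ) + 1) ahat by exact_mod_cast hahat)).2.2
    exact_mod_cast this
  have ha1_d : Differentiable ℝ (deriv ahat) := ha1.differentiable one_ne_zero
  have ha2_c : Continuous (deriv (deriv ahat)) := (contDiff_one_iff_deriv.mp ha1).2
  -- abbreviation for the right-hand side
  obtain ⟨R, hR⟩ : ∃ R : ℝ,
      R = normC1 ucheck (Icc (0:ℝ) L) + normC1 psi (Icc (0:ℝ) T) := ⟨_, rfl⟩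
  rw [← hR]
  have n1 : 0 ≤ supAbs ucheck (Icc (0:ℝ) L) := supAbs_nonneg hu_c hL.le
  have n2 : 0 ≤ supAbs (deriv ucheck) (Icc (0:ℝ) L) := supAbs_nonneg hu'_c hL.le
  have n3 : 0 ≤ supAbs psi (Icc (0:ℝ) T) := supAbs_nonneg hpsi_c hT.le
  have n4 : 0 ≤ supAbs (deriv psi) (Icc (0:ℝ) T) := supAbs_nonneg hpsi'_c hT.le
  have hMu : supAbs ucheck (Icc (0:ℝ) L) ≤ R := by
    rw [hR]; simp only [normC1]; linarith
  have hMu' : supAbs (deriv ucheck) (Icc (0:ℝ) L) ≤ R := by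
    rw [hR]; simp only [normC1]; linarith
  have hMpsi : supAbs psi (Icc (0:ℝ) T) ≤ R := by
    rw [hR]; simp only [normC1]; linarith
  have hMpsi' : supAbs (deriv psi) (Icc (0:ℝ) T) ≤ R := by
    rw [hR]; simp only [normC1]; linarith
  have hR0 : 0 ≤ R := le_trans n1 hMu
  -- the observation interval J is covered by h
  have hsurj : Icc (h 0) (h T) ⊆ h '' Icc (0:ℝ) T :=
    intermediate_value_Icc hT.le hh.continuous.continuousOn
  -- bound on fhat on J
  have hf_bd : ∀ y ∈ Icc (h 0) (h T), |fhat y| ≤ R := by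
    intro y hy
    obtain ⟨t, ht, rfl⟩ := hsurj hy
    rw [hpsieq t ht]
    exact (le_supAbs hpsi_c ht).trans hMpsi
  -- bound on deriv fhat on J
  have hf'_bd_t : ∀ t ∈ Icc (0:ℝ) T, |deriv fhat (h t)| ≤ R / δ := by
    apply le_on_Icc_of_Ioo hT ((hf'_c.comp hh.continuous).abs)
    intro t ht
    show |deriv fhat (h t)| ≤ R / δ
    have htI : t ∈ Icc (0:ℝ) T := Ioo_subset_Icc_self ht
    have e2 : deriv (fhat ∘ h) t = deriv fhat (h t) * deriv h t :=
      deriv_comp t hf_d.differentiableAt hh_d.differentiableAt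
    have e1 : deriv (fhat ∘ h) t = deriv psi t := by
      apply Filter.EventuallyEq.deriv_eq
      filter_upwards [Ioo_mem_nhds ht.1 ht.2] with s hs
      exact hpsieq s (Ioo_subset_Icc_self hs)
    have hht : δ ≤ deriv h t := hh' t htI
    have hhtpos : 0 < deriv h t := lt_of_lt_of_le hδ hht
    have hpsit : |deriv psi t| ≤ R := (le_supAbs hpsi'_c htI).trans hMpsi'
    have hval : deriv fhat (h t) = deriv psi t / deriv h t := by
      field_simp
      rw [← e2, e1]
    rw [hval, abs_div, abs_of_pos hhtpos]
    exact div_le_div₀ hR0 hpsit hδ hht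
  have hf'_bd : ∀ y ∈ Icc (h 0) (h T), |deriv fhat y| ≤ R / δ := by
    intro y hy
    obtain ⟨t, ht, rfl⟩ := hsurj hy
    exact hf'_bd_t t ht
  -- the function F = ahat * g'
  have dF : ∀ x, deriv (fun y => ahat y * deriv g y) x
      = deriv ahat x * deriv g x + ahat x * deriv (deriv g) x :=
    fun x => deriv_mul ha_d.differentiableAt hg2d.differentiableAt
  have hFw : ∀ x ∈ Icc (0:ℝ) L,
      deriv (fun y => ahat y * deriv g y) x = ucheck x - fhat (g x) := by
    intro x hx
    have := heq x hx
    linarith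
  have hw_bd : ∀ x ∈ Icc (0:ℝ) L, |ucheck x - fhat (g x)| ≤ 2 * R := by
    intro x hx
    have h1 : |ucheck x| ≤ R := (le_supAbs hu_c hx).trans hMu
    have h2 : |fhat (g x)| ≤ R := hf_bd _ (hrange hx)
    have := abs_sub (ucheck x) (fhat (g x))
    linarith
  have hF_d : Differentiable ℝ (fun y => ahat y * deriv g y) := ha_d.mul hg2d
  have hF_bd : ∀ x ∈ Icc (0:ℝ) L, |ahat x * deriv g x| ≤ 2 * R * L := by
    intro x hx
    have hmvt := Convex.norm_image_sub_le_of_norm_deriv_le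
      (f := fun y => ahat y * deriv g y) (s := Icc (0:ℝ) L) (C := 2 * R)
      (fun y _ => hF_d.differentiableAt)
      (fun y hy => by rw [Real.norm_eq_abs, hFw y hy]; exact hw_bd y hy)
      (convex_Icc _ _) (right_mem_Icc.2 hL.le) hx
    simp only [haL, zero_mul, sub_zero, Real.norm_eq_abs] at hmvt
    have hxL : |x - L| ≤ L := by
      rw [abs_of_nonpos (by linarith [hx.2])]
      linarith [hx.1]
    calc |ahat x * deriv g x| ≤ 2 * R * |x - L| := hmvt
      _ ≤ 2 * R * L := by
          apply mul_le_mul_of_nonneg_left hxL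
          linarith
  -- bound on ahat
  have ha_bd : ∀ x ∈ Icc (0:ℝ) L, |ahat x| ≤ c0 * R := by
    intro x hx
    have hgx : μ ≤ deriv g x := hg' x hx
    have hgxpos : 0 < deriv g x := lt_of_lt_of_le hμ hgx
    have hval : ahat x = ahat x * deriv g x / deriv g x := by
      field_simp
    rw [hval, abs_div, abs_of_pos hgxpos]
    calc |ahat x * deriv g x| / deriv g x ≤ 2 * R * L / μ :=
          div_le_div₀ (by positivity) (hF_bd x hx) hμ hgx
      _ = c0 * R := by rw [hc0]; ring
  -- bound on deriv ahat
  have ha'_bd : ∀ x ∈ Icc (0:ℝ) L, |deriv ahat x| ≤ c1 * R := by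
    intro x hx
    have hgx : μ ≤ deriv g x := hg' x hx
    have hgxpos : 0 < deriv g x := lt_of_lt_of_le hμ hgx
    have e : deriv ahat x * deriv g x
        = (ucheck x - fhat (g x)) - ahat x * deriv (deriv g) x := by
      have h1 := dF x
      have h2 := hFw x hx
      linarith
    have hnum : |deriv ahat x * deriv g x| ≤ 2 * R + c0 * R * K := by
      rw [e]
      have t1 := abs_sub (ucheck x - fhat (g x)) (ahat x * deriv (deriv g) x)
      have b1 := hw_bd x hx
      have b2 : |ahat x * deriv (deriv g) x| ≤ c0 * R * K := by
        rw [abs_mul]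
        exact mul_le_mul (ha_bd x hx) (hK2 x hx) (abs_nonneg _)
          (mul_nonneg hc0nn hR0)
      linarith
    have hval : deriv ahat x = deriv ahat x * deriv g x / deriv g x := by
      field_simp
    rw [hval, abs_div, abs_of_pos hgxpos]
    calc |deriv ahat x * deriv g x| / deriv g x ≤ (2 * R + c0 * R * K) / μ :=
          div_le_div₀ (by positivity) hnum hμ hgx
      _ = c1 * R := by rw [hc1]; ring
  -- bound on deriv (deriv ahat)
  have ha''_bd : ∀ x ∈ Icc (0:ℝ) L, |deriv (deriv ahat) x| ≤ c2 * R := by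
    apply le_on_Icc_of_Ioo hL (ha2_c.abs)
    intro x hx
    show |deriv (deriv ahat) x| ≤ c2 * R
    have hxI : x ∈ Icc (0:ℝ) L := Ioo_subset_Icc_self hx
    have hgx : μ ≤ deriv g x := hg' x hxI
    have hgxpos : 0 < deriv g x := lt_of_lt_of_le hμ hgx
    have hP : deriv (fun y => deriv ahat y * deriv g y + ahat y * deriv (deriv g) y) x
        = deriv (fun y => ucheck y - fhat (g y)) x := by
      apply Filter.EventuallyEq.deriv_eq
      filter_upwards [Ioo_mem_nhds hx.1 hx.2] with s hs
      rw [← dF s]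
      exact hFw s (Ioo_subset_Icc_self hs)
    have hPcalc : deriv (fun y => deriv ahat y * deriv g y + ahat y * deriv (deriv g) y) x
        = (deriv (deriv ahat) x * deriv g x + deriv ahat x * deriv (deriv g) x)
          + (deriv ahat x * deriv (deriv g) x + ahat x * deriv (deriv (deriv g)) x) := by
      rw [deriv_fun_add (f := fun y => deriv ahat y * deriv g y)
          (g := fun y => ahat y * deriv (deriv g) y) (ha1_d.differentiableAt.mul hg2d.differentiableAt)
          (ha_d.differentiableAt.mul hg3d.differentiableAt),
        deriv_fun_mul ha1_d.differentiableAt hg2d.differentiableAt,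
        deriv_fun_mul ha_d.differentiableAt hg3d.differentiableAt]
    have hwcalc : deriv (fun y => ucheck y - fhat (g y)) x
        = deriv ucheck x - deriv fhat (g x) * deriv g x := by
      have hcomp : DifferentiableAt ℝ (fun y => fhat (g y)) x :=
        DifferentiableAt.comp x hf_d.differentiableAt hgd.differentiableAt
      rw [deriv_fun_sub hu_d.differentiableAt hcomp]
      congr 1
      have := deriv_comp x (h₂ := fhat) (h := g)
        hf_d.differentiableAt hgd.differentiableAt
      simpa [Function.comp_def] using this
    have e : deriv (deriv ahat) x * deriv g x
        = (deriv ucheck x - deriv fhat (g x) * deriv g x)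
          - (deriv ahat x * deriv (deriv g) x) - (deriv ahat x * deriv (deriv g) x)
          - ahat x * deriv (deriv (deriv g)) x := by
      have h1 := hP
      rw [hPcalc, hwcalc] at h1
      linarith
    have b1 : |deriv ucheck x| ≤ R := (le_supAbs hu'_c hxI).trans hMu'
    have b2 : |deriv fhat (g x) * deriv g x| ≤ R / δ * K := by
      rw [abs_mul]
      exact mul_le_mul (hf'_bd _ (hrange hxI)) (hK1 x hxI) (abs_nonneg _)
        (div_nonneg hR0 hδ.le)
    have b3 : |deriv ahat x * deriv (deriv g) x| ≤ c1 * R * K := by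
      rw [abs_mul]
      exact mul_le_mul (ha'_bd x hxI) (hK2 x hxI) (abs_nonneg _)
        (mul_nonneg hc1nn hR0)
    have b4 : |ahat x * deriv (deriv (deriv g)) x| ≤ c0 * R * K := by
      rw [abs_mul]
      exact mul_le_mul (ha_bd x hxI) (hK3 x hxI) (abs_nonneg _)
        (mul_nonneg hc0nn hR0)
    have hnum : |deriv (deriv ahat) x * deriv g x|
        ≤ (R + R / δ * K) + c1 * R * K + c1 * R * K + c0 * R * K := by
      rw [e]
      have t1 := abs_sub (deriv ucheck x) (deriv fhat (g x) * deriv g x)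
      have t2 := abs_sub (deriv ucheck x - deriv fhat (g x) * deriv g x)
        (deriv ahat x * deriv (deriv g) x)
      have t3 := abs_sub (deriv ucheck x - deriv fhat (g x) * deriv g x
        - deriv ahat x * deriv (deriv g) x) (deriv ahat x * deriv (deriv g) x)
      have t4 := abs_sub (deriv ucheck x - deriv fhat (g x) * deriv g x
        - deriv ahat x * deriv (deriv g) x - deriv ahat x * deriv (deriv g) x)
        (ahat x * deriv (deriv (deriv g)) x)
      linarith
    have hval : deriv (deriv ahat) x = deriv (deriv ahat) x * deriv g x / deriv g x := by
      field_simp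
    rw [hval, abs_div, abs_of_pos hgxpos]
    calc |deriv (deriv ahat) x * deriv g x| / deriv g x
        ≤ ((R + R / δ * K) + c1 * R * K + c1 * R * K + c0 * R * K) / μ := by
          apply div_le_div₀ _ hnum hμ hgx
          have q1 : 0 ≤ R / δ * K := mul_nonneg (div_nonneg hR0 hδ.le) hK0
          have q2 : 0 ≤ c1 * R * K := mul_nonneg (mul_nonneg hc1nn hR0) hK0
          have q3 : 0 ≤ c0 * R * K := mul_nonneg (mul_nonneg hc0nn hR0) hK0
          linarith
      _ = c2 * R := by
          rw [hc2, hc1, hc0]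
          field_simp
          ring
  -- assemble
  have S1 : supAbs ahat (Icc (0:ℝ) L) ≤ c0 * R :=
    supAbs_le (mul_nonneg hc0nn hR0) ha_bd
  have S2 : supAbs (deriv ahat) (Icc (0:ℝ) L) ≤ c1 * R :=
    supAbs_le (mul_nonneg hc1nn hR0) ha'_bd
  have S3 : supAbs (deriv (deriv ahat)) (Icc (0:ℝ) L) ≤ c2 * R :=
    supAbs_le (mul_nonneg hc2nn hR0) ha''_bd
  have S4 : supAbs fhat (Icc (h 0) (h T)) ≤ R := supAbs_le hR0 hf_bd
  have S5 : supAbs (deriv fhat) (Icc (h 0) (h T)) ≤ R / δ :=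
    supAbs_le (div_nonneg hR0 hδ.le) hf'_bd
  have hCeq : (c0 + c1 + c2 + 1 + 1 / δ) * R
      = c0 * R + c1 * R + c2 * R + R + R / δ := by
    field_simp
  simp only [normC2, normC1]
  rw [hCeq]
  linarith
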